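/- Let G be a countably compact T1 paratopological group with a suitable set, H a Hausdorff paratopological group, and f : G → H a continuous homomorphism with dense image. Then H has a suitable set. -/

import Mathlib

def IsSuitable {G : Type*} [Group G] [TopologicalSpace G] (S : Set G) : Prop :=
  DiscreteTopology S ∧ IsClosed (S ∪ {1}) ∧ Dense (Subgroup.closure S : Set G)

/-- Every countable open cover has a finite subcover. -/
def CountablyCompactCov (X : Type*) [TopologicalSpace X] : Prop :=
  ∀ 𝒰 : Set (Set X), 𝒰.Countable → (∀ U ∈ 𝒰, IsOpen U) → ⋃₀ 𝒰 = Set.univ →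
    ∃ 𝒱 ⊆ 𝒰, 𝒱.Finite ∧ ⋃₀ 𝒱 = Set.univ

/-- In a countably compact (covering sense) space, a closed subset all of whose points
are isolated (via open sets of the ambient space) is finite. -/
lemma finite_of_closed_isolated {G : Type*} [TopologicalSpace G]
    (hcc : CountablyCompactCov G) {A : Set G} (hA : IsClosed A)
    (hd : ∀ a ∈ A, ∃ V : Set G, IsOpen V ∧ V ∩ A = {a}) : A.Finite := by
  by_contra hinf
  have hinf : A.Infinite := hinf
  choose V hVo hVA using hd
  set e := Set.Infinite.natEmbedding A hinf with he
  set a : ℕ → G := fun n => (e n : G) with ha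
  have haA : ∀ n, a n ∈ A := fun n => (e n).2
  have hainj : Function.Injective a := fun n m h => e.injective (Subtype.ext h)
  set E : Set G := Set.range a with hE
  have hEA : E ⊆ A := by rintro x ⟨n, rfl⟩; exact haA n
  have hVmem : ∀ x (hx : x ∈ A), x ∈ V x hx := by
    intro x hx
    have : x ∈ V x hx ∩ A := (hVA x hx) ▸ rfl
    exact this.1
  have hEclosed : IsClosed E := by
    rw [← isOpen_compl_iff, isOpen_iff_forall_mem_open]
    intro x hx
    by_cases hxA : x ∈ A
    · refine ⟨V x hxA, ?_, hVo x hxA, hVmem x hxA⟩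
      intro y hy hyE
      have : y ∈ V x hxA ∩ A := ⟨hy, hEA hyE⟩
      rw [hVA x hxA] at this
      exact hx (this ▸ hyE)
    · exact ⟨Aᶜ, fun y hy hyE => hy (hEA hyE), hA.isOpen_compl, hxA⟩
  set 𝒰 : Set (Set G) := insert Eᶜ (Set.range fun n => V (a n) (haA n)) with h𝒰
  obtain ⟨𝒱, h𝒱sub, h𝒱fin, h𝒱cov⟩ := hcc 𝒰
    ((Set.countable_range _).insert _)
    (by
      rintro U (rfl | ⟨n, rfl⟩)
      · exact hEclosed.isOpen_compl
      · exact hVo _ _)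
    (by
      ext x
      simp only [Set.mem_univ, iff_true, Set.mem_sUnion]
      by_cases hx : x ∈ E
      · obtain ⟨n, rfl⟩ := hx
        exact ⟨V (a n) (haA n), Set.mem_insert_of_mem _ ⟨n, rfl⟩, hVmem _ _⟩
      · exact ⟨Eᶜ, Set.mem_insert _ _, hx⟩)
  have key : ∀ n, V (a n) (haA n) ∈ 𝒱 := by
    intro n
    have : a n ∈ ⋃₀ 𝒱 := h𝒱cov ▸ Set.mem_univ _
    obtain ⟨W, hW𝒱, haW⟩ := this
    rcases h𝒱sub hW𝒱 with rfl | ⟨m, rfl⟩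
    · exact absurd ⟨n, rfl⟩ haW
    · have : a n ∈ V (a m) (haA m) ∩ A := ⟨haW, haA n⟩
      rw [hVA] at this
      have hnm : n = m := hainj this
      subst hnm
      exact hW𝒱
  have Finj : Function.Injective fun n => V (a n) (haA n) := by
    intro n m h
    have h' : V (a n) (haA n) = V (a m) (haA m) := h
    have h1 : a n ∈ V (a m) (haA m) ∩ A := ⟨h' ▸ hVmem (a n) (haA n), haA n⟩
    rw [hVA] at h1
    exact hainj h1
  exact (Set.infinite_range_of_injective Finj) (h𝒱fin.subset (Set.range_subset_iff.mpr key))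

theorem stmt4 {G H : Type*} [Group G] [TopologicalSpace G] [ContinuousMul G] [T1Space G]
    [Group H] [TopologicalSpace H] [ContinuousMul H] [T2Space H]
    (hcc : CountablyCompactCov G) (hGS : ∃ S : Set G, IsSuitable S)
    (f : G →* H) (hf : Continuous f) (hd : DenseRange f) :
    ∃ T : Set H, IsSuitable T := by
  obtain ⟨S, hSdisc, hSclosed, hSdense⟩ := hGS
  set C : Set G := S ∪ {1} with hC
  -- every point of S is isolated in G relative to S
  have hSiso : ∀ s ∈ S, ∃ V : Set G, IsOpen V ∧ V ∩ S = {s} := by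
    intro s hs
    have hop : IsOpen ({⟨s, hs⟩} : Set S) := isOpen_discrete _
    rw [isOpen_induced_iff] at hop
    obtain ⟨V, hVo, hV⟩ := hop
    refine ⟨V, hVo, ?_⟩
    ext y
    constructor
    · rintro ⟨hyV, hyS⟩
      have : (⟨y, hyS⟩ : S) ∈ Subtype.val ⁻¹' V := hyV
      rw [hV] at this
      simpa [Subtype.ext_iff] using this
    · rintro rfl
      have : (⟨y, hs⟩ : S) ∈ ({⟨y, hs⟩} : Set S) := rfl
      rw [← hV] at this
      exact ⟨this, hs⟩
  -- every point of C other than 1 is isolated in G relative to C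
  have hCiso : ∀ c ∈ C, c ≠ 1 → ∃ V : Set G, IsOpen V ∧ V ∩ C = {c} := by
    intro c hc hc1
    have hcS : c ∈ S := by
      rcases hc with h | h
      · exact h
      · exact absurd (Set.mem_singleton_iff.mp h) hc1
    obtain ⟨V, hVo, hVS⟩ := hSiso c hcS
    refine ⟨V \ {1}, hVo.sdiff isClosed_singleton, ?_⟩
    ext y
    constructor
    · rintro ⟨⟨hyV, hy1⟩, hyC⟩
      rcases hyC with hyS | hy
      · have : y ∈ V ∩ S := ⟨hyV, hyS⟩
        rwa [hVS] at this
      · exact absurd hy hy1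
    · rintro rfl
      have : y ∈ V ∩ S := hVS ▸ rfl
      exact ⟨⟨this.1, hc1⟩, Or.inl this.2⟩
  -- C is compact
  have hCcompact : IsCompact C := by
    refine isCompact_of_finite_subcover fun {ι} U hU hcov => ?_
    classical
    have h1C : (1 : G) ∈ C := Or.inr rfl
    obtain ⟨i₀, hi₀⟩ := Set.mem_iUnion.mp (hcov h1C)
    set A : Set G := C \ U i₀ with hA
    have hAclosed : IsClosed A := hSclosed.sdiff (hU i₀)
    have hAfin : A.Finite := by
      refine finite_of_closed_isolated hcc hAclosed fun b hb => ?_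
      have hb1 : b ≠ 1 := fun h => hb.2 (h ▸ hi₀)
      obtain ⟨V, hVo, hVC⟩ := hCiso b hb.1 hb1
      refine ⟨V, hVo, ?_⟩
      apply Set.eq_singleton_iff_unique_mem.mpr
      constructor
      · exact ⟨(hVC ▸ rfl : b ∈ V ∩ C).1, hb⟩
      · rintro y ⟨hyV, hyA⟩
        have : y ∈ V ∩ C := ⟨hyV, hyA.1⟩
        rwa [hVC] at this
    obtain ⟨t, ht⟩ := hAfin.isCompact.elim_finite_subcover U hU
      (fun x hx => hcov hx.1)
    refine ⟨insert i₀ t, fun x hx => ?_⟩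
    by_cases hxU : x ∈ U i₀
    · exact Set.mem_biUnion (Finset.mem_insert_self _ _) hxU
    · obtain ⟨i, hi, hxi⟩ := Set.mem_iUnion₂.mp (ht ⟨hx, hxU⟩)
      exact Set.mem_biUnion (Finset.mem_insert_of_mem hi) hxi
  -- The candidate suitable set in H
  set T : Set H := f '' S \ {1} with hT
  have hTunion : T ∪ {1} = f '' C := by
    rw [hC, Set.image_union, Set.image_singleton, map_one, hT, Set.diff_union_self]
  -- key finiteness: outside any neighborhood of 1, f '' S is finite
  have hfin : ∀ U : Set H, IsOpen U → (1 : H) ∈ U → (f '' S \ U).Finite := by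
    intro U hUo hU1
    set B : Set G := C \ f ⁻¹' U with hB
    have hBclosed : IsClosed B := hSclosed.sdiff (hUo.preimage hf)
    have hBfin : B.Finite := by
      refine finite_of_closed_isolated hcc hBclosed fun b hb => ?_
      have hb1 : b ≠ 1 := by
        rintro rfl
        exact hb.2 (by simpa using hU1)
      obtain ⟨V, hVo, hVC⟩ := hCiso b hb.1 hb1
      refine ⟨V, hVo, ?_⟩
      apply Set.eq_singleton_iff_unique_mem.mpr
      refine ⟨⟨(hVC ▸ rfl : b ∈ V ∩ C).1, hb⟩, ?_⟩
      rintro y ⟨hyV, hyB⟩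
      have : y ∈ V ∩ C := ⟨hyV, hyB.1⟩
      rwa [hVC] at this
    refine (hBfin.image f).subset ?_
    rintro x ⟨⟨s, hsS, rfl⟩, hxU⟩
    exact ⟨s, ⟨Or.inl hsS, fun h => hxU h⟩, rfl⟩
  refine ⟨T, ?_, ?_, ?_⟩
  · -- discreteness
    rw [discreteTopology_iff_isOpen_singleton]
    rintro ⟨t, htT⟩
    have ht1 : (1 : H) ≠ t := fun h => htT.2 h.symm
    obtain ⟨U, W, hUo, hWo, h1U, htW, hUW⟩ := t2_separation ht1
    have hF : (f '' S \ U).Finite := hfin U hUo h1U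
    set V : Set H := W \ ((f '' S \ U) \ {t}) with hV
    have hVo : IsOpen V := hWo.sdiff ((hF.subset Set.diff_subset).isClosed)
    rw [isOpen_induced_iff]
    refine ⟨V, hVo, ?_⟩
    ext ⟨x, hxT⟩
    simp only [Set.mem_preimage, Set.mem_singleton_iff, Subtype.ext_iff]
    constructor
    · rintro ⟨hxW, hxF⟩
      by_contra hxt
      refine hxF ⟨⟨hxT.1, ?_⟩, hxt⟩
      exact fun hxU => Set.disjoint_left.mp hUW hxU hxW
    · rintro rfl
      exact ⟨htW, fun h => h.2 rfl⟩
  · -- closedness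
    rw [hTunion]
    exact (hCcompact.image hf).isClosed
  · -- density
    have hdense : Dense (f '' (Subgroup.closure S : Set G)) :=
      hd.dense_image hf hSdense
    refine hdense.mono ?_
    have h1 : f '' (Subgroup.closure S : Set G) = (Subgroup.map f (Subgroup.closure S) : Set H) := rfl
    rw [h1, f.map_closure]
    have h2 : Subgroup.closure (f '' S) ≤ Subgroup.closure T := by
      rw [Subgroup.closure_le]
      rintro x ⟨s, hsS, rfl⟩
      by_cases hx1 : f s = 1
      · rw [hx1]; exact (Subgroup.closure T).one_mem
      · exact Subgroup.subset_closure ⟨⟨s, hsS, rfl⟩, hx1⟩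
    exact fun x hx => h2 hx
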